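/- Let a > 0, κ > 0, χ > 0 and b > 2χ. Suppose ū, w : [0, ∞) → (0, ∞) are differentiable and satisfy, for all t ≥ 0, ū′(t) = χ ū(t)((ū(t))^κ − (w(t))^κ) + ū(t)(a − b(ū(t))^κ) and w′(t) = χ w(t)((w(t))^κ − (ū(t))^κ) + w(t)(a − b(w(t))^κ), and suppose w(0) ≤ (a/b)^{1/κ} ≤ ū(0). Then there exist constants C > 0 and ε > 0 such that |ū(t) − (a/b)^{1/κ}| + |w(t) − (a/b)^{1/κ}| ≤ C e^{−εt} for all t ≥ 0; in particular ū(t) and w(t) both converge exponentially to (a/b)^{1/κ} as t → ∞. -/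

import Mathlib

set_option maxHeartbeats 1000000

open Set Filter Real
open scoped Topology

open Set Filter Real
open scoped Topology

/-- One-sided Grönwall wrapper with genuine right derivatives. -/
lemma my_gron {f f' : ℝ → ℝ} {t₀ T K δ ε : ℝ}
    (hc : ContinuousOn f (Icc t₀ T))
    (hd : ∀ x ∈ Ico t₀ T, HasDerivWithinAt f (f' x) (Ici x) x)
    (h0 : f t₀ ≤ δ)
    (hb : ∀ x ∈ Ico t₀ T, f' x ≤ K * f x + ε) :
    ∀ x ∈ Icc t₀ T, f x ≤ gronwallBound δ K ε (x - t₀) :=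
  le_gronwallBound_of_liminf_deriv_right_le hc
    (fun x hx r hr => ((hd x hx).liminf_right_slope_le hr).mono fun z hz => by
      rwa [slope_def_field, div_eq_inv_mul] at hz) h0 hb

/-- Sign preservation lemma, Dini (frequently-slope) form. -/
lemma my_sign {f f' : ℝ → ℝ} {t₀ : ℝ}
    (hc : ContinuousOn f (Ici t₀))
    (hd : ∀ x, t₀ ≤ x → ∀ r, f' x < r →
      ∃ᶠ z in 𝓝[>] x, (z - x)⁻¹ * (f z - f x) < r)
    (h0 : f t₀ ≤ 0)
    (hb : ∀ T, t₀ < T → ∃ K, ∀ x ∈ Ico t₀ T, 0 ≤ f x → f' x ≤ K * f x) :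
    ∀ x, t₀ ≤ x → f x ≤ 0 := by
  intro x₂ hx₂
  by_contra hpos
  push_neg at hpos
  have hne : t₀ ≠ x₂ := by rintro rfl; exact absurd h0 (not_le.2 hpos)
  have hlt : t₀ < x₂ := lt_of_le_of_ne hx₂ hne
  obtain ⟨K, hK⟩ := hb x₂ hlt
  set S : Set ℝ := {t | t ∈ Icc t₀ x₂ ∧ f t ≤ 0} with hS
  have hSc : IsClosed S := by
    have : S = Icc t₀ x₂ ∩ f ⁻¹' (Iic 0) := by ext t; simp [hS]
    rw [this]
    exact (hc.mono (Icc_subset_Ici_self)).preimage_isClosed_of_isClosed isClosed_Icc isClosed_Iic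
  have hScp : IsCompact S := isCompact_Icc.of_isClosed_subset hSc fun t ht => ht.1
  have hSne : S.Nonempty := ⟨t₀, ⟨le_refl _, hlt.le⟩, h0⟩
  set t₁ := sSup S with ht₁
  have ht₁S : t₁ ∈ S := hScp.sSup_mem hSne
  have ht₁0 : t₀ ≤ t₁ := ht₁S.1.1
  have ht₁2 : t₁ ≤ x₂ := ht₁S.1.2
  have hft₁ : f t₁ ≤ 0 := ht₁S.2
  have ht₁lt : t₁ < x₂ := by
    rcases lt_or_eq_of_le ht₁2 with h | h
    · exact h
    · rw [h] at hft₁; exact absurd hft₁ (not_le.2 hpos)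
  have hgt : ∀ t ∈ Ioc t₁ x₂, 0 < f t := by
    intro t ht
    by_contra h
    push_neg at h
    have : t ∈ S := ⟨⟨ht₁0.trans ht.1.le, ht.2⟩, h⟩
    exact absurd (le_csSup hScp.bddAbove this) (not_le.2 ht.1)
  set δ' := f x₂ * Real.exp (-(|K| * (x₂ - t₁))) with hδ'
  have hδ'pos : 0 < δ' := mul_pos hpos (Real.exp_pos _)
  -- find t' ∈ Ioc t₁ x₂ with f t' < δ'
  have hcw : Tendsto f (𝓝[Ioc t₁ x₂] t₁) (𝓝 (f t₁)) :=
    (hc t₁ ht₁0).mono fun z hz => ht₁0.trans hz.1.le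
  have hne2 : (𝓝[Ioc t₁ x₂] t₁).NeBot := by
    rw [nhdsWithin_Ioc_eq_nhdsGT ht₁lt]; infer_instance
  have hev : ∀ᶠ z in 𝓝[Ioc t₁ x₂] t₁, f z < δ' :=
    hcw.eventually_lt_const (lt_of_le_of_lt hft₁ hδ'pos)
  obtain ⟨t', ht'lt, ht'mem⟩ := (hev.and self_mem_nhdsWithin).exists
  -- Grönwall on [t', x₂]
  have key := le_gronwallBound_of_liminf_deriv_right_le
    (f := f) (f' := f') (δ := f t') (K := |K|) (ε := 0) (a := t') (b := x₂)
    (hc.mono fun z hz => (ht₁0.trans ht'mem.1.le).trans hz.1)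
    (fun x hx r hr => hd x ((ht₁0.trans ht'mem.1.le).trans hx.1) r hr)
    le_rfl
    (fun x hx => by
      have hfx : 0 < f x := hgt x ⟨lt_of_lt_of_le ht'mem.1 hx.1, hx.2.le⟩
      have h1 : f' x ≤ K * f x := hK x ⟨(ht₁0.trans ht'mem.1.le).trans hx.1, hx.2⟩ hfx.le
      nlinarith [le_abs_self K, abs_nonneg K])
  have h2 := key x₂ ⟨ht'mem.2, le_refl _⟩
  rw [gronwallBound_ε0] at h2
  have h3 : Real.exp (|K| * (x₂ - t')) ≤ Real.exp (|K| * (x₂ - t₁)) := by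
    apply Real.exp_le_exp.2
    apply mul_le_mul_of_nonneg_left (by linarith [ht'mem.1]) (abs_nonneg K)
  have hft' : 0 < f t' := hgt t' ht'mem
  have h4 : f x₂ ≤ f t' * Real.exp (|K| * (x₂ - t₁)) :=
    h2.trans (mul_le_mul_of_nonneg_left h3 hft'.le)
  have h5 : f t' * Real.exp (|K| * (x₂ - t₁)) < δ' * Real.exp (|K| * (x₂ - t₁)) :=
    mul_lt_mul_of_pos_right ht'lt (Real.exp_pos _)
  rw [hδ', mul_assoc, ← Real.exp_add, neg_add_cancel, Real.exp_zero, mul_one] at h5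
  linarith

/-- Sign preservation with genuine derivatives within `Ici t₀`. -/
lemma my_sign' {f f' : ℝ → ℝ} {t₀ : ℝ}
    (hd : ∀ x, t₀ ≤ x → HasDerivWithinAt f (f' x) (Ici t₀) x)
    (h0 : f t₀ ≤ 0)
    (hb : ∀ T, t₀ < T → ∃ K, ∀ x ∈ Ico t₀ T, 0 ≤ f x → f' x ≤ K * f x) :
    ∀ x, t₀ ≤ x → f x ≤ 0 := by
  apply my_sign (fun x hx => (hd x hx).continuousWithinAt) _ h0 hb
  intro x hx r hr
  have := ((hd x hx).mono (Ici_subset_Ici.2 hx)).liminf_right_slope_le hr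
  exact this.mono fun z hz => by rwa [slope_def_field, div_eq_inv_mul] at hz

lemma my_gb_le {δ K ε x : ℝ} (hδ : 0 ≤ δ) (hK : K < 0) (hε : 0 ≤ ε) (hx : 0 ≤ x) :
    gronwallBound δ K ε x ≤ δ + ε / (-K) := by
  rw [gronwallBound_of_K_ne_0 hK.ne]
  have h1 : Real.exp (K * x) ≤ 1 := Real.exp_le_one_iff.2 (mul_nonpos_of_nonpos_of_nonneg hK.le hx)
  have h2 : 0 < Real.exp (K * x) := Real.exp_pos _
  show δ * Real.exp (K * x) + ε / K * (Real.exp (K * x) - 1) ≤ δ + ε / -K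
  have h3 : ε / K * (Real.exp (K * x) - 1) = ε * (1 - Real.exp (K * x)) / (-K) := by
    field_simp; ring
  rw [h3]
  have h4 : ε * (1 - Real.exp (K * x)) / (-K) ≤ ε / (-K) := by
    rw [div_le_div_iff₀ (by linarith) (by linarith)]
    nlinarith [mul_nonneg (mul_nonneg hε h2.le) (neg_pos.2 hK).le]
  nlinarith

/-- Lipschitz bound for `rpow` on a compact positive interval. -/
lemma my_rpow_lip {m M γ : ℝ} (hm : 0 < m) (hγ : 0 < γ) {x y : ℝ}
    (hx : x ∈ Icc m M) (hy : y ∈ Icc m M) :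
    |x ^ γ - y ^ γ| ≤ γ * max (m ^ (γ - 1)) (M ^ (γ - 1)) * |x - y| := by
  have hmM : m ≤ M := hx.1.trans hx.2
  have hMpos : 0 < M := hm.trans_le hmM
  set L : ℝ := γ * max (m ^ (γ - 1)) (M ^ (γ - 1)) with hL
  have key : ∀ z ∈ Icc m M, HasDerivWithinAt (fun u : ℝ => u ^ γ)
      (γ * z ^ (γ - 1)) (Icc m M) z := by
    intro z hz
    exact (Real.hasDerivAt_rpow_const (Or.inl (hm.trans_le hz.1).ne')).hasDerivWithinAt
  have bound : ∀ z ∈ Icc m M, ‖γ * z ^ (γ - 1)‖ ≤ L := by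
    intro z hz
    have hz0 : 0 < z := hm.trans_le hz.1
    have h1 : 0 ≤ γ * z ^ (γ - 1) := mul_nonneg hγ.le (Real.rpow_nonneg hz0.le _)
    rw [Real.norm_eq_abs, abs_of_nonneg h1, hL]
    rcases le_total 1 γ with h | h
    · have : z ^ (γ - 1) ≤ M ^ (γ - 1) := Real.rpow_le_rpow hz0.le hz.2 (by linarith)
      exact mul_le_mul_of_nonneg_left (this.trans (le_max_right _ _)) hγ.le
    · have : z ^ (γ - 1) ≤ m ^ (γ - 1) :=
        Real.rpow_le_rpow_of_nonpos hm hz.1 (by linarith)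
      exact mul_le_mul_of_nonneg_left (this.trans (le_max_left _ _)) hγ.le
  have := Convex.norm_image_sub_le_of_norm_hasDerivWithin_le key bound (convex_Icc m M) hy hx
  simpa [Real.norm_eq_abs] using this

open Set Filter Real
open scoped Topology

section AuxCopy
-- (aux lemmas assumed; this file will be concatenated)
end AuxCopy

lemma my_key (a b χ κ : ℝ) (ha : 0 < a) (hκ : 0 < κ) (hχ : 0 < χ) (hb : 2 * χ < b)
    (p q : ℝ → ℝ)
    (hp : ∀ t, 0 ≤ t → 0 < p t) (hq : ∀ t, 0 ≤ t → 0 < q t)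
    (hpd : ∀ t, 0 ≤ t → HasDerivWithinAt p
      (κ * p t * (χ * (p t - q t) + (a - b * p t))) (Ici 0) t)
    (hqd : ∀ t, 0 ≤ t → HasDerivWithinAt q
      (κ * q t * (χ * (q t - p t) + (a - b * q t))) (Ici 0) t)
    (hq0 : q 0 ≤ a / b) (hp0 : a / b ≤ p 0) :
    ∃ m M C ε : ℝ, 0 < m ∧ 0 < ε ∧ 0 < C ∧
      (∀ t, 0 ≤ t → m ≤ q t ∧ q t ≤ a / b ∧ a / b ≤ p t ∧ p t ≤ M) ∧
      (∀ t, 0 ≤ t → |p t - a / b| + |q t - a / b| ≤ C * Real.exp (-ε * t)) := by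
  have hb0 : 0 < b := by linarith
  have hbχ : 0 < b - χ := by linarith
  have hb2 : 0 < b - 2 * χ := by linarith
  set P : ℝ := a / b with hPdef
  have hP : 0 < P := div_pos ha hb0
  have hbP : b * P = a := by rw [hPdef]; field_simp
  have hpc : ContinuousOn p (Ici 0) := fun t ht => (hpd t ht).continuousWithinAt
  have hqc : ContinuousOn q (Ici 0) := fun t ht => (hqd t ht).continuousWithinAt
  -- Step A : q t ≤ P ≤ p t
  have StepA : ∀ t, 0 ≤ t → P ≤ p t ∧ q t ≤ P := by
    set A : ℝ → ℝ := fun x => -(κ * p x * (χ * (p x - q x) + (a - b * p x))) with hA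
    set B : ℝ → ℝ := fun x => κ * q x * (χ * (q x - p x) + (a - b * q x)) with hB
    set F : ℝ → ℝ := fun x => max (P - p x) (q x - P) with hF
    set F' : ℝ → ℝ := fun x => if P - p x < q x - P then B x
      else if q x - P < P - p x then A x else max (A x) (B x) with hF'
    have key := my_sign (f := F) (f' := F') (t₀ := 0) ?_ ?_ ?_ ?_
    · intro t ht
      have h1 := key t ht
      have h2 : P - p t ≤ F t := le_max_left _ _
      have h3 : q t - P ≤ F t := le_max_right _ _
      exact ⟨by linarith, by linarith⟩
    · -- continuity
      exact (continuousOn_const.sub hpc).sup (hqc.sub continuousOn_const)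
    · -- Dini condition
      intro x hx r hr
      have hmono : 𝓝[>] x ≤ 𝓝[Ici (0:ℝ)] x :=
        nhdsWithin_mono x (fun z hz => le_trans hx (le_of_lt hz))
      have hmem : ∀ᶠ z in 𝓝[>] x, x < z := eventually_mem_nhdsWithin
      rcases lt_trichotomy (P - p x) (q x - P) with h | h | h
      · -- F = q - P locally
        have hF'x : F' x = B x := by rw [hF']; simp only [if_pos h]
        rw [hF'x] at hr
        have hqd' : HasDerivWithinAt (fun z => q z - P) (B x) (Ici x) x :=
          ((hqd x hx).mono (Ici_subset_Ici.2 hx)).sub_const P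
        have hslope := hqd'.Ioi_of_Ici.limsup_slope_le' (lt_irrefl x) hr
        have hev : ∀ᶠ z in 𝓝[>] x, P - p z < q z - P := by
          have hcont : ContinuousWithinAt
              (fun z => (q z - P) - (P - p z)) (Ici 0) x :=
            ((hqc x hx).sub continuousWithinAt_const).sub
              (continuousWithinAt_const.sub (hpc x hx))
          have h0 : (0:ℝ) < (q x - P) - (P - p x) := by linarith
          have := hcont.eventually_const_lt h0
          exact (this.filter_mono hmono).mono fun z hz => by linarith
        refine ((hslope.and hev).mono ?_).frequently
        rintro z ⟨h1, h2⟩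
        have hFz : F z = q z - P := max_eq_right h2.le
        have hFx : F x = q x - P := max_eq_right h.le
        rw [slope_def_field, div_eq_inv_mul] at h1
        rw [hFz, hFx]
        exact h1
      · -- equal values
        have hF'x : F' x = max (A x) (B x) := by
          rw [hF']
          simp only [h, lt_irrefl, if_neg (lt_irrefl _), if_false]
        rw [hF'x] at hr
        have hrA : A x < r := lt_of_le_of_lt (le_max_left _ _) hr
        have hrB : B x < r := lt_of_le_of_lt (le_max_right _ _) hr
        have hpd' : HasDerivWithinAt (fun z => P - p z) (A x) (Ici x) x :=
          ((hpd x hx).mono (Ici_subset_Ici.2 hx)).const_sub P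
        have hqd' : HasDerivWithinAt (fun z => q z - P) (B x) (Ici x) x :=
          ((hqd x hx).mono (Ici_subset_Ici.2 hx)).sub_const P
        have h1 := hpd'.Ioi_of_Ici.limsup_slope_le' (lt_irrefl x) hrA
        have h2 := hqd'.Ioi_of_Ici.limsup_slope_le' (lt_irrefl x) hrB
        refine (((h1.and h2).and hmem).mono ?_).frequently
        rintro z ⟨⟨hz1, hz2⟩, hz3⟩
        have hzx : 0 < z - x := sub_pos.2 hz3
        rw [slope_def_field, div_lt_iff₀ hzx] at hz1 hz2
        have hFx : F x = q x - P := max_eq_right h.le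
        have hflt : F z - F x < r * (z - x) := by
          have hFzle : F z ≤ max (P - p z) (q z - P) := le_of_eq rfl
          have : max (P - p z) (q z - P) < F x + r * (z - x) := by
            apply max_lt
            · rw [hFx, ← h]; linarith
            · rw [hFx]; linarith
          linarith [hFzle.trans_lt this]
        calc (z - x)⁻¹ * (F z - F x) < (z - x)⁻¹ * (r * (z - x)) :=
              mul_lt_mul_of_pos_left hflt (inv_pos.2 hzx)
          _ = r := by field_simp
      · -- F = P - p locally
        have hF'x : F' x = A x := by
          simp only [hF', if_neg (not_lt.2 h.le), if_pos h]
        rw [hF'x] at hr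
        have hpd' : HasDerivWithinAt (fun z => P - p z) (A x) (Ici x) x :=
          ((hpd x hx).mono (Ici_subset_Ici.2 hx)).const_sub P
        have hslope := hpd'.Ioi_of_Ici.limsup_slope_le' (lt_irrefl x) hr
        have hev : ∀ᶠ z in 𝓝[>] x, q z - P < P - p z := by
          have hcont : ContinuousWithinAt
              (fun z => (P - p z) - (q z - P)) (Ici 0) x :=
            (continuousWithinAt_const.sub (hpc x hx)).sub
              ((hqc x hx).sub continuousWithinAt_const)
          have h0 : (0:ℝ) < (P - p x) - (q x - P) := by linarith
          have := hcont.eventually_const_lt h0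
          exact (this.filter_mono hmono).mono fun z hz => by linarith
        refine ((hslope.and hev).mono ?_).frequently
        rintro z ⟨h1, h2⟩
        have hFz : F z = P - p z := max_eq_left h2.le
        have hFx : F x = P - p x := max_eq_left h.le
        rw [slope_def_field, div_eq_inv_mul] at h1
        rw [hFz, hFx]
        exact h1
    · -- F 0 ≤ 0
      exact max_le (by linarith) (by linarith)
    · -- bound
      intro T hT
      obtain ⟨z, hz, hzmax⟩ := isCompact_Icc.exists_isMaxOn
        (⟨0, le_rfl, hT.le⟩ : (Icc (0:ℝ) T).Nonempty)
        (show ContinuousOn (fun t => κ * χ * (p t + q t)) (Icc 0 T) from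
          continuousOn_const.mul ((hpc.add hqc).mono Icc_subset_Ici_self))
      refine ⟨κ * χ * (p z + q z), fun x hx hFx0 => ?_⟩
      have hx0 : 0 ≤ x := hx.1
      have hKx : κ * χ * (p x + q x) ≤ κ * χ * (p z + q z) :=
        hzmax ⟨hx.1, hx.2.le⟩
      have hpx := hp x hx0
      have hqx := hq x hx0
      have eB : B x = κ * q x * (χ * (P - p x) + (χ - b) * (q x - P)) := by
        rw [hB]
        have e : χ * (q x - p x) + (a - b * q x)
            = χ * (P - p x) + (χ - b) * (q x - P) := by rw [← hbP]; ring
        simp only [e]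
      have eA : A x = κ * p x * (χ * (q x - P) + (χ - b) * (P - p x)) := by
        rw [hA]
        have e : -(χ * (p x - q x) + (a - b * p x))
            = χ * (q x - P) + (χ - b) * (P - p x) := by rw [← hbP]; ring
        calc -(κ * p x * (χ * (p x - q x) + (a - b * p x)))
            = κ * p x * (-(χ * (p x - q x) + (a - b * p x))) := by ring
          _ = κ * p x * (χ * (q x - P) + (χ - b) * (P - p x)) := by rw [e]
      have hbnd : ∀ u v : ℝ, 0 < u → u ≤ p x + q x → v ≤ F x →
          κ * u * (χ * v + (χ - b) * (F x)) ≤ κ * χ * (p z + q z) * F x := by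
        intro u v hu huv hvF
        have h1 : κ * u * (χ * v) ≤ κ * u * (χ * F x) :=
          mul_le_mul_of_nonneg_left (mul_le_mul_of_nonneg_left hvF hχ.le)
            (mul_nonneg hκ.le hu.le)
        have h2 : κ * u * ((χ - b) * F x) ≤ 0 :=
          mul_nonpos_of_nonneg_of_nonpos (mul_nonneg hκ.le hu.le)
            (mul_nonpos_of_nonpos_of_nonneg (by linarith) hFx0)
        have h3 : κ * u * (χ * F x) ≤ κ * χ * (p x + q x) * F x := by
          have := mul_le_mul_of_nonneg_right
            (mul_le_mul_of_nonneg_left huv hκ.le) hFx0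
          have e : κ * u * (χ * F x) = κ * u * F x * χ := by ring
          nlinarith [mul_le_mul_of_nonneg_right
            (mul_le_mul_of_nonneg_left huv (mul_nonneg hκ.le hχ.le)) hFx0]
        have h4 : κ * χ * (p x + q x) * F x ≤ κ * χ * (p z + q z) * F x :=
          mul_le_mul_of_nonneg_right hKx hFx0
        have e5 : κ * u * (χ * v + (χ - b) * F x)
            = κ * u * (χ * v) + κ * u * ((χ - b) * F x) := by ring
        linarith [e5.le, e5.ge]
      rcases lt_trichotomy (P - p x) (q x - P) with h | h | h
      · have hFeq : F x = q x - P := max_eq_right h.le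
        have hF'x : F' x = B x := by rw [hF']; simp only [if_pos h]
        rw [hF'x, eB]
        have := hbnd (q x) (P - p x) hqx (by linarith) (hFeq ▸ h.le)
        rw [hFeq] at this ⊢
        exact this
      · have hFeq : F x = q x - P := max_eq_right h.le
        have hF'x : F' x = max (A x) (B x) := by
          rw [hF']
          simp only [h, lt_irrefl, if_neg (lt_irrefl _), if_false]
        rw [hF'x]
        apply max_le
        · rw [eA]
          have := hbnd (p x) (q x - P) hpx (by linarith)
            (by rw [hFeq])
          rw [hFeq] at this ⊢
          have e : χ * (q x - P) + (χ - b) * (P - p x)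
              = χ * (q x - P) + (χ - b) * (q x - P) := by rw [h]
          rw [e]
          exact this
        · rw [eB]
          have := hbnd (q x) (P - p x) hqx (by linarith)
            (by rw [hFeq]; linarith)
          rw [hFeq] at this ⊢
          exact this
      · have hFeq : F x = P - p x := max_eq_left h.le
        have hF'x : F' x = A x := by
          simp only [hF', if_neg (not_lt.2 h.le), if_pos h]
        rw [hF'x, eA]
        have := hbnd (p x) (q x - P) hpx (by linarith)
          (by rw [hFeq]; linarith)
        rw [hFeq] at this ⊢
        exact this
  -- Step B : p ≤ M
  set M : ℝ := max (p 0) (a / (b - χ)) with hMdef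
  have hM0 : 0 < M := lt_of_lt_of_le (hp 0 le_rfl) (le_max_left _ _)
  have hPM : P ≤ M := le_trans
    (div_le_div_of_nonneg_left ha.le hbχ (by linarith)) (le_max_right _ _)
  have StepB : ∀ t, 0 ≤ t → p t ≤ M := by
    have hs := my_sign' (t₀ := 0) (f := fun t => p t - M)
      (f' := fun x => κ * p x * (χ * (p x - q x) + (a - b * p x)))
      (fun x hx => (hpd x hx).sub_const M)
      (by simp only [sub_nonpos]; exact le_max_left _ _)
      ?_
    · intro t ht; linarith [show p t - M ≤ 0 from hs t ht]
    · intro T hT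
      refine ⟨0, fun x hx hfx => ?_⟩
      have hfx' : 0 ≤ p x - M := hfx
      have hx0 : 0 ≤ x := hx.1
      have hpx := hp x hx0
      have hqx := hq x hx0
      have hax : a ≤ p x * (b - χ) := by
        refine (div_le_iff₀ hbχ).1 ?_
        calc a / (b - χ) ≤ M := le_max_right _ _
        _ ≤ p x := by linarith
      have hpar : χ * (p x - q x) + (a - b * p x) ≤ 0 := by
        nlinarith [mul_pos hχ hqx]
      rw [zero_mul]
      exact mul_nonpos_of_nonneg_of_nonpos (by positivity) hpar
  -- Step C : exponential upper estimate for p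
  set δ₀ : ℝ := max (p 0 - a / (b - χ)) 0 with hδ₀def
  have hδ₀ : 0 ≤ δ₀ := le_max_right _ _
  set L₁ : ℝ := κ * (b - χ) * P with hL₁def
  have hL₁ : 0 < L₁ := by positivity
  have StepC : ∀ t, 0 ≤ t → p t ≤ a / (b - χ) + δ₀ * Real.exp (-L₁ * t) := by
    have hs := my_sign' (t₀ := 0)
      (f := fun t => p t - a / (b - χ) - δ₀ * Real.exp (-L₁ * t))
      (f' := fun x => κ * p x * (χ * (p x - q x) + (a - b * p x))
        - δ₀ * (Real.exp (-L₁ * x) * (-L₁ * 1)))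
      ?_ ?_ ?_
    · intro t ht
      linarith [show p t - a / (b - χ) - δ₀ * Real.exp (-L₁ * t) ≤ 0 from hs t ht]
    · intro x hx
      have hexp : HasDerivAt (fun t => δ₀ * Real.exp (-L₁ * t))
          (δ₀ * (Real.exp (-L₁ * x) * (-L₁ * 1))) x :=
        (((hasDerivAt_id x).const_mul (-L₁)).exp.const_mul δ₀)
      exact ((hpd x hx).sub_const (a / (b - χ))).sub hexp.hasDerivWithinAt
    · have h1 : p 0 - a / (b - χ) ≤ δ₀ := le_max_left _ _
      simp only [mul_zero, neg_zero, Real.exp_zero, mul_one]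
      linarith
    · intro T hT
      refine ⟨-L₁, fun x hx hfx => ?_⟩
      have hfx' : 0 ≤ p x - a / (b - χ) - δ₀ * Real.exp (-L₁ * x) := hfx
      have hx0 : 0 ≤ x := hx.1
      have hpx := hp x hx0
      have hqx := hq x hx0
      have hEpos : 0 < Real.exp (-L₁ * x) := Real.exp_pos _
      have hd0 : 0 ≤ p x - a / (b - χ) := by nlinarith [mul_nonneg hδ₀ hEpos.le]
      have hPp : P ≤ p x := by
        have h2 : a / b ≤ a / (b - χ) := div_le_div_of_nonneg_left ha.le hbχ (by linarith)
        rw [hPdef]; linarith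
      have h1 : κ * p x * (χ * (p x - q x) + (a - b * p x))
          ≤ κ * p x * (a - (b - χ) * p x) := by
        have : χ * (p x - q x) + (a - b * p x) ≤ a - (b - χ) * p x := by
          nlinarith [mul_pos hχ hqx]
        exact mul_le_mul_of_nonneg_left this (by positivity)
      have h2 : κ * p x * (a - (b - χ) * p x) ≤ -L₁ * (p x - a / (b - χ)) := by
        have e1 : a - (b - χ) * p x = -((b - χ) * (p x - a / (b - χ))) := by
          field_simp; ring
        rw [e1, hL₁def]
        linarith [mul_nonneg (mul_nonneg (mul_nonneg hκ.le hbχ.le)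
          (sub_nonneg.2 hPp)) hd0]
      have key : κ * p x * (χ * (p x - q x) + (a - b * p x))
          ≤ -L₁ * (p x - a / (b - χ)) := h1.trans h2
      nlinarith [key]
  -- Step D : eventual lower bound on a - χ p
  set c : ℝ := a * (b - 2 * χ) / (b - χ) with hcdef
  have hc : 0 < c := by positivity
  set t₁ : ℝ := max 0 (Real.log (2 * χ * δ₀ / c + 1) / L₁) with ht₁def
  have ht₁0 : 0 ≤ t₁ := le_max_left _ _
  have StepD : ∀ t, t₁ ≤ t → c / 2 ≤ a - χ * p t := by
    intro t ht
    have ht0 : 0 ≤ t := le_trans ht₁0 ht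
    have hargpos : (0:ℝ) < 2 * χ * δ₀ / c + 1 := by positivity
    have hlog : Real.log (2 * χ * δ₀ / c + 1) / L₁ ≤ t₁ := le_max_right _ _
    have h1 : Real.log (2 * χ * δ₀ / c + 1) ≤ L₁ * t := by
      rw [div_le_iff₀ hL₁] at hlog
      linarith [mul_le_mul_of_nonneg_left ht hL₁.le]
    have h2 : Real.exp (-L₁ * t) ≤ (2 * χ * δ₀ / c + 1)⁻¹ := by
      rw [← Real.exp_log hargpos, ← Real.exp_neg]
      exact Real.exp_le_exp.2 (by linarith)
    have h3 : χ * δ₀ * Real.exp (-L₁ * t) ≤ c / 2 := by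
      have h4 : χ * δ₀ * (2 * χ * δ₀ / c + 1)⁻¹ ≤ c / 2 := by
        rw [mul_inv_le_iff₀ hargpos]
        have e : c / 2 * (2 * χ * δ₀ / c + 1) = χ * δ₀ + c / 2 := by
          field_simp
        rw [e]; linarith
      have h6 := mul_le_mul_of_nonneg_left h2 (mul_nonneg hχ.le hδ₀)
      linarith
    have h5 := StepC t ht0
    have hid : a - χ * (a / (b - χ)) = c := by
      rw [hcdef]; field_simp; ring
    linarith [mul_le_mul_of_nonneg_left h5 hχ.le]
  -- Step E : global positive lower bound on q
  obtain ⟨m₂, hm₂, hqlow⟩ : ∃ m₂ : ℝ, 0 < m₂ ∧ ∀ t, 0 ≤ t → m₂ ≤ q t := by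
    set m' : ℝ := min (q t₁) (c / (2 * b)) with hm'def
    have hm' : 0 < m' := lt_min (hq t₁ ht₁0) (by positivity)
    have hlow1 : ∀ t, t₁ ≤ t → m' ≤ q t := by
      have hs := my_sign' (t₀ := t₁) (f := fun t => m' - q t)
        (f' := fun x => -(κ * q x * (χ * (q x - p x) + (a - b * q x))))
        (fun x hx => ((hqd x (ht₁0.trans hx)).mono
          (Ici_subset_Ici.2 ht₁0)).const_sub m')
        (by simp only [sub_nonpos]; exact min_le_left _ _)
        ?_
      · intro t ht; linarith [show m' - q t ≤ 0 from hs t ht]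
      · intro T hT
        refine ⟨0, fun x hx hfx => ?_⟩
        have hfx' : 0 ≤ m' - q x := hfx
        have hx1 : t₁ ≤ x := hx.1
        have hx0 : 0 ≤ x := le_trans ht₁0 hx1
        have hqx := hq x hx0
        have hpx := hp x hx0
        have hD := StepD x hx1
        have hbq : b * q x ≤ c / 2 := by
          have h1 : q x ≤ c / (2 * b) := le_trans (by linarith) (min_le_right _ _)
          calc b * q x ≤ b * (c / (2 * b)) := mul_le_mul_of_nonneg_left h1 hb0.le
          _ = c / 2 := by field_simp
        have hpar : 0 ≤ χ * (q x - p x) + (a - b * q x) := by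
          nlinarith [mul_pos hχ hqx]
        rw [zero_mul]
        exact neg_nonpos.2 (mul_nonneg (by positivity) hpar)
    obtain ⟨z, hz, hzmin⟩ := isCompact_Icc.exists_isMinOn
      (⟨0, le_rfl, ht₁0⟩ : (Icc (0:ℝ) t₁).Nonempty)
      (hqc.mono Icc_subset_Ici_self)
    refine ⟨min (q z) m', lt_min (hq z hz.1) hm', fun t ht => ?_⟩
    rcases le_total t t₁ with h | h
    · exact le_trans (min_le_left _ _) (hzmin ⟨ht, h⟩)
    · exact le_trans (min_le_right _ _) (hlow1 t h)
  -- Step F : exponential decay of p - q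
  set L₂ : ℝ := κ * (b - 2 * χ) * m₂ with hL₂def
  have hL₂ : 0 < L₂ := by positivity
  have hqp : ∀ t, 0 ≤ t → q t ≤ p t :=
    fun t ht => le_trans (StepA t ht).2 (StepA t ht).1
  have StepF : ∀ t, 0 ≤ t → p t - q t ≤ M * Real.exp (-L₂ * t) := by
    have hs0 : ∀ t, 0 ≤ t → 0 ≤ 1 - q t / p t := by
      intro t ht
      have h1 := (div_le_one (hp t ht)).2 (hqp t ht)
      linarith
    have main : ∀ t, 0 ≤ t → 1 - q t / p t ≤ Real.exp (-L₂ * t) := by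
      intro T hT
      have hgr := my_gron (t₀ := 0) (T := T) (K := -L₂) (δ := 1) (ε := 0)
        (f := fun t => 1 - q t / p t)
        (f' := fun x => -((κ * q x * (χ * (q x - p x) + (a - b * q x)) * p x
            - q x * (κ * p x * (χ * (p x - q x) + (a - b * p x)))) / p x ^ 2))
        ?_ ?_ ?_ ?_
      · have h := hgr T ⟨hT, le_rfl⟩
        rw [gronwallBound_ε0, sub_zero, one_mul] at h
        exact h
      · exact continuousOn_const.sub ((hqc.mono Icc_subset_Ici_self).div
          (hpc.mono Icc_subset_Ici_self) fun t ht => (hp t ht.1).ne')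
      · intro x hx
        exact (((hqd x hx.1).div (hpd x hx.1) (hp x hx.1).ne').const_sub 1).mono
          (Ici_subset_Ici.2 hx.1)
      · have h1 : 0 < q 0 / p 0 := div_pos (hq 0 le_rfl) (hp 0 le_rfl)
        linarith
      · intro x hx
        have hx0 : 0 ≤ x := hx.1
        have hpx := hp x hx0
        have hqx := hq x hx0
        have hqpx := hqp x hx0
        have hql := hqlow x hx0
        have e1 : κ * q x * (χ * (q x - p x) + (a - b * q x)) * p x
            - q x * (κ * p x * (χ * (p x - q x) + (a - b * p x)))
            = κ * q x * p x * ((b - 2 * χ) * (p x - q x)) := by ring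
        have e2 : -(κ * q x * p x * ((b - 2 * χ) * (p x - q x)) / p x ^ 2)
            = -(κ * (b - 2 * χ) * q x * (p x - q x)) / p x := by
          field_simp
        have e3 : (1 : ℝ) - q x / p x = (p x - q x) / p x := by
          field_simp
        have hnum : -(κ * (b - 2 * χ) * q x * (p x - q x))
            ≤ -L₂ * (p x - q x) := by
          rw [hL₂def]
          linarith [mul_nonneg (mul_nonneg (mul_nonneg hκ.le hb2.le)
            (sub_nonneg.2 hql)) (sub_nonneg.2 hqpx)]
        calc -((κ * q x * (χ * (q x - p x) + (a - b * q x)) * p x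
            - q x * (κ * p x * (χ * (p x - q x) + (a - b * p x)))) / p x ^ 2)
            = -(κ * (b - 2 * χ) * q x * (p x - q x)) / p x := by rw [e1]; exact e2
          _ ≤ -L₂ * (p x - q x) / p x := by gcongr
          _ = -L₂ * (1 - q x / p x) + 0 := by rw [e3]; ring
    intro t ht
    have h1 : p t - q t = p t * (1 - q t / p t) := by
      rw [mul_sub, mul_one, ← mul_div_assoc, mul_div_cancel_left₀ _ (hp t ht).ne']
    rw [h1]
    exact mul_le_mul (StepB t ht) (main t ht) (hs0 t ht) hM0.le
  -- Step G : exponential decay of p - P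
  set L₃ : ℝ := κ * b * P with hL₃def
  have hL₃ : 0 < L₃ := by positivity
  set ε : ℝ := min L₂ L₃ / 2 with hεdef
  have hε : 0 < ε := by
    have := lt_min hL₂ hL₃
    positivity
  have hεL₂ : ε ≤ L₂ := by
    have := min_le_left L₂ L₃; rw [hεdef]; linarith
  have hεL₃ : ε < L₃ := by
    have := min_le_right L₂ L₃
    have := hL₃
    rw [hεdef]; linarith
  set C₁ : ℝ := κ * χ * M * M with hC₁def
  have hC₁ : 0 ≤ C₁ := by positivity
  set C₂ : ℝ := (p 0 - P) + C₁ / (L₃ - ε) with hC₂def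
  have hC₂ : 0 ≤ C₂ := by
    have h1 : 0 ≤ p 0 - P := by linarith [(StepA 0 le_rfl).1]
    have h2 : 0 ≤ C₁ / (L₃ - ε) := div_nonneg hC₁ (by linarith)
    rw [hC₂def]; linarith
  have StepG : ∀ t, 0 ≤ t → p t - P ≤ C₂ * Real.exp (-ε * t) := by
    intro T hT
    have hgr := my_gron (t₀ := 0) (T := T) (K := ε - L₃) (δ := p 0 - P) (ε := C₁)
      (f := fun t => (p t - P) * Real.exp (ε * t))
      (f' := fun x => κ * p x * (χ * (p x - q x) + (a - b * p x)) * Real.exp (ε * x)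
        + (p x - P) * (Real.exp (ε * x) * (ε * 1)))
      ?_ ?_ ?_ ?_
    · have h1 := hgr T ⟨hT, le_rfl⟩
      have h2 : gronwallBound (p 0 - P) (ε - L₃) C₁ (T - 0) ≤ C₂ := by
        have h3 := my_gb_le (δ := p 0 - P) (K := ε - L₃) (ε := C₁) (x := T - 0)
          (by linarith [(StepA 0 le_rfl).1]) (by linarith) hC₁ (by linarith)
        have e : -(ε - L₃) = L₃ - ε := by ring
        rw [e] at h3
        rw [hC₂def]
        exact h3
      have h3 : (p T - P) * Real.exp (ε * T) ≤ C₂ := le_trans h1 h2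
      have h4 := mul_le_mul_of_nonneg_right h3 (Real.exp_pos (-ε * T)).le
      rw [mul_assoc, ← Real.exp_add] at h4
      have e : ε * T + -ε * T = 0 := by ring
      rw [e, Real.exp_zero, mul_one] at h4
      exact h4
    · exact ((hpc.mono Icc_subset_Ici_self).sub continuousOn_const).mul
        ((Real.continuous_exp.comp (continuous_const.mul continuous_id)).continuousOn)
    · intro x hx
      have hexp : HasDerivAt (fun t => Real.exp (ε * t))
          (Real.exp (ε * x) * (ε * 1)) x := ((hasDerivAt_id x).const_mul ε).exp
      exact (((hpd x hx.1).sub_const P).mul hexp.hasDerivWithinAt).mono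
        (Ici_subset_Ici.2 hx.1)
    · simp
    · intro x hx
      show κ * p x * (χ * (p x - q x) + (a - b * p x)) * Real.exp (ε * x)
          + (p x - P) * (Real.exp (ε * x) * (ε * 1))
          ≤ (ε - L₃) * ((p x - P) * Real.exp (ε * x)) + C₁
      have hx0 : 0 ≤ x := hx.1
      have hpx := hp x hx0
      have hqx := hq x hx0
      have hqpx := hqp x hx0
      have hpP : P ≤ p x := (StepA x hx0).1
      have hpM : p x ≤ M := StepB x hx0
      have hF := StepF x hx0
      have hEpos : 0 < Real.exp (ε * x) := Real.exp_pos _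
      have hFpos : 0 < Real.exp (-L₂ * x) := Real.exp_pos _
      have hFE : Real.exp (-L₂ * x) * Real.exp (ε * x) ≤ 1 := by
        rw [← Real.exp_add]
        apply Real.exp_le_one_iff.2
        linarith [mul_nonneg (sub_nonneg.2 hεL₂) hx0]
      have part1 : κ * p x * (χ * (p x - q x))
          ≤ κ * χ * M * (M * Real.exp (-L₂ * x)) := by
        have u1 : 0 ≤ p x - q x := sub_nonneg.2 hqpx
        have u2 : p x * (p x - q x) ≤ M * (M * Real.exp (-L₂ * x)) :=
          mul_le_mul hpM hF u1 hM0.le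
        have u3 := mul_le_mul_of_nonneg_left u2 (mul_nonneg hκ.le hχ.le)
        linarith [u3]
      have part2 : κ * p x * (a - b * p x) ≤ -L₃ * (p x - P) := by
        have e : a - b * p x = -(b * (p x - P)) := by rw [← hbP]; ring
        rw [e, hL₃def]
        linarith [mul_nonneg (mul_nonneg (mul_nonneg hκ.le hb0.le)
          (sub_nonneg.2 hpP)) (sub_nonneg.2 hpP)]
      have sum : κ * p x * (χ * (p x - q x) + (a - b * p x))
          ≤ κ * χ * M * (M * Real.exp (-L₂ * x)) + -L₃ * (p x - P) := by
        have e : κ * p x * (χ * (p x - q x) + (a - b * p x))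
            = κ * p x * (χ * (p x - q x)) + κ * p x * (a - b * p x) := by ring
        linarith [e.le, e.ge]
      have mulE := mul_le_mul_of_nonneg_right sum hEpos.le
      have h6 : κ * χ * M * (M * Real.exp (-L₂ * x)) * Real.exp (ε * x) ≤ C₁ := by
        have e : κ * χ * M * (M * Real.exp (-L₂ * x)) * Real.exp (ε * x)
            = (κ * χ * M * M) * (Real.exp (-L₂ * x) * Real.exp (ε * x)) := by ring
        rw [e, hC₁def]
        exact mul_le_of_le_one_right
          (mul_nonneg (mul_nonneg (mul_nonneg hκ.le hχ.le) hM0.le) hM0.le) hFE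
      linarith [mulE, h6]
  -- conclusion
  refine ⟨m₂, M, C₂ + M, ε, hm₂, hε, by linarith, ?_, ?_⟩
  · intro t ht
    exact ⟨hqlow t ht, (StepA t ht).2, (StepA t ht).1, StepB t ht⟩
  · intro t ht
    have h1 : |p t - P| = p t - P := abs_of_nonneg (by linarith [(StepA t ht).1])
    have h2 : |q t - P| = P - q t := by
      rw [abs_of_nonpos (by linarith [(StepA t ht).2])]; ring
    have h3 : P - q t ≤ p t - q t := by linarith [(StepA t ht).1]
    have h4 : p t - q t ≤ M * Real.exp (-L₂ * t) := StepF t ht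
    have h5 : Real.exp (-L₂ * t) ≤ Real.exp (-ε * t) := by
      apply Real.exp_le_exp.2; nlinarith
    have h6 : M * Real.exp (-L₂ * t) ≤ M * Real.exp (-ε * t) :=
      mul_le_mul_of_nonneg_left h5 hM0.le
    have h7 := StepG t ht
    rw [h1, h2]
    have : (C₂ + M) * Real.exp (-ε * t) = C₂ * Real.exp (-ε * t) + M * Real.exp (-ε * t) := by
      ring
    linarith

/-- Steps 1–4 of the proof of Theorem 6.1: for b > 2χ, the solutions of the
comparison ODE system on [0, ∞) with w(0) ≤ (a/b)^{1/κ} ≤ ū(0) both converge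
exponentially to (a/b)^{1/κ}. -/
theorem stmt12 (a b χ κ : ℝ) (ha : 0 < a) (hκ : 0 < κ) (hχ : 0 < χ)
    (hb : 2 * χ < b)
    (ubar w : ℝ → ℝ)
    (hub : ∀ t : ℝ, 0 ≤ t → 0 < ubar t)
    (hwb : ∀ t : ℝ, 0 ≤ t → 0 < w t)
    (hud : ∀ t : ℝ, 0 ≤ t →
      HasDerivWithinAt ubar
        (χ * ubar t * (ubar t ^ κ - w t ^ κ) + ubar t * (a - b * ubar t ^ κ))
        (Set.Ici 0) t)
    (hwd : ∀ t : ℝ, 0 ≤ t →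
      HasDerivWithinAt w
        (χ * w t * (w t ^ κ - ubar t ^ κ) + w t * (a - b * w t ^ κ))
        (Set.Ici 0) t)
    (hw0 : w 0 ≤ (a / b) ^ (1 / κ)) (hu0 : (a / b) ^ (1 / κ) ≤ ubar 0) :
    ∃ C : ℝ, 0 < C ∧ ∃ ε : ℝ, 0 < ε ∧ ∀ t : ℝ, 0 ≤ t →
      |ubar t - (a / b) ^ (1 / κ)| + |w t - (a / b) ^ (1 / κ)| ≤
        C * Real.exp (-ε * t) := by
  have hb0 : 0 < b := by linarith
  have hab : 0 < a / b := div_pos ha hb0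
  set p : ℝ → ℝ := fun t => ubar t ^ κ with hpdef
  set q : ℝ → ℝ := fun t => w t ^ κ with hqdef
  have hp : ∀ t, 0 ≤ t → 0 < p t := fun t ht => Real.rpow_pos_of_pos (hub t ht) κ
  have hq : ∀ t, 0 ≤ t → 0 < q t := fun t ht => Real.rpow_pos_of_pos (hwb t ht) κ
  have hpd : ∀ t, 0 ≤ t → HasDerivWithinAt p
      (κ * p t * (χ * (p t - q t) + (a - b * p t))) (Set.Ici 0) t := by
    intro t ht
    have h1 := (Real.hasDerivAt_rpow_const (x := ubar t) (p := κ)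
      (Or.inl (hub t ht).ne')).comp_hasDerivWithinAt t (hud t ht)
    have e : ubar t ^ (κ - 1) * ubar t = ubar t ^ κ := by
      rw [← Real.rpow_add_one (hub t ht).ne' (κ - 1)]
      norm_num
    refine h1.congr_deriv ?_
    rw [hpdef, hqdef]
    simp only []
    rw [← e]
    ring
  have hqd : ∀ t, 0 ≤ t → HasDerivWithinAt q
      (κ * q t * (χ * (q t - p t) + (a - b * q t))) (Set.Ici 0) t := by
    intro t ht
    have h1 := (Real.hasDerivAt_rpow_const (x := w t) (p := κ)
      (Or.inl (hwb t ht).ne')).comp_hasDerivWithinAt t (hwd t ht)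
    have e : w t ^ (κ - 1) * w t = w t ^ κ := by
      rw [← Real.rpow_add_one (hwb t ht).ne' (κ - 1)]
      norm_num
    refine h1.congr_deriv ?_
    rw [hpdef, hqdef]
    simp only []
    rw [← e]
    ring
  have hPκ : ((a / b) ^ (1 / κ)) ^ κ = a / b := by
    rw [← Real.rpow_mul hab.le, one_div, inv_mul_cancel₀ hκ.ne', Real.rpow_one]
  have hq0 : q 0 ≤ a / b := by
    rw [hqdef]
    calc w 0 ^ κ ≤ ((a / b) ^ (1 / κ)) ^ κ :=
          Real.rpow_le_rpow (hwb 0 le_rfl).le hw0 hκ.le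
      _ = a / b := hPκ
  have hp0 : a / b ≤ p 0 := by
    rw [hpdef]
    calc a / b = ((a / b) ^ (1 / κ)) ^ κ := hPκ.symm
      _ ≤ ubar 0 ^ κ := Real.rpow_le_rpow
          (Real.rpow_nonneg hab.le _) hu0 hκ.le
  obtain ⟨m, M, C, ε, hm, hε, hC, hbounds, hdecay⟩ :=
    my_key a b χ κ ha hκ hχ hb p q hp hq hpd hqd hq0 hp0
  -- conversion back
  set γ : ℝ := 1 / κ with hγdef
  have hγ : 0 < γ := by positivity
  set L : ℝ := γ * max (m ^ (γ - 1)) (M ^ (γ - 1)) with hLdef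
  have hL : 0 < L := by
    have h1 : 0 < m ^ (γ - 1) := Real.rpow_pos_of_pos hm _
    have h2 : 0 < max (m ^ (γ - 1)) (M ^ (γ - 1)) :=
      lt_of_lt_of_le h1 (le_max_left _ _)
    positivity
  have hmP : m ≤ a / b := le_trans (hbounds 0 le_rfl).1 (hbounds 0 le_rfl).2.1
  have hPM : a / b ≤ M := le_trans (hbounds 0 le_rfl).2.2.1 (hbounds 0 le_rfl).2.2.2
  have hPmem : a / b ∈ Set.Icc m M := ⟨hmP, hPM⟩
  have hustar : (a / b) ^ γ = (a / b) ^ (1 / κ) := by rw [hγdef]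
  refine ⟨L * C, mul_pos hL hC, ε, hε, fun t ht => ?_⟩
  have hpt : p t ∈ Set.Icc m M :=
    ⟨le_trans hmP (hbounds t ht).2.2.1, (hbounds t ht).2.2.2⟩
  have hqt : q t ∈ Set.Icc m M :=
    ⟨(hbounds t ht).1, le_trans (hbounds t ht).2.1 hPM⟩
  have hu_eq : ubar t = p t ^ γ := by
    rw [hγdef, hpdef, one_div]
    exact (Real.rpow_rpow_inv (hub t ht).le hκ.ne').symm
  have hw_eq : w t = q t ^ γ := by
    rw [hγdef, hqdef, one_div]
    exact (Real.rpow_rpow_inv (hwb t ht).le hκ.ne').symm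
  have h1 : |ubar t - (a / b) ^ (1 / κ)| ≤ L * |p t - a / b| := by
    rw [hu_eq, ← hustar, hLdef]
    exact my_rpow_lip hm hγ hpt hPmem
  have h2 : |w t - (a / b) ^ (1 / κ)| ≤ L * |q t - a / b| := by
    rw [hw_eq, ← hustar, hLdef]
    exact my_rpow_lip hm hγ hqt hPmem
  have h3 := hdecay t ht
  have h4 := mul_le_mul_of_nonneg_left h3 hL.le
  calc |ubar t - (a / b) ^ (1 / κ)| + |w t - (a / b) ^ (1 / κ)|
      ≤ L * |p t - a / b| + L * |q t - a / b| := add_le_add h1 h2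
    _ = L * (|p t - a / b| + |q t - a / b|) := by ring
    _ ≤ L * (C * Real.exp (-ε * t)) := h4
    _ = L * C * Real.exp (-ε * t) := by ring
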